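/- Image decomposition for composable Mayer–Vietoris maps. With the maps f₁₂, f₂₃, f, f₍₁₂,₃₎ as in the context, the inclusion (b₁, b₂) ↦ (b₁, b₂, 0) carries im(f₁₂) into im(f), the map Q(b₁, b₂, b₃) = (q₁₂(b₁, b₂), b₃) carries im(f) onto im(f₍₁₂,₃₎), and the resulting sequence 0 → im(f₁₂) → im(f) → im(f₍₁₂,₃₎) → 0 is a short exact sequence; in particular im(f) ≅ im(f₁₂) ⊕ im(f₍₁₂,₃₎). -/

import Mathlib

/-- **Image decomposition for composable Mayer–Vietoris maps.**  With
`f(a₂, a₃) = ((f₁₂a₂)₁, (f₁₂a₂)₂ + (f₂₃a₃)₁, (f₂₃a₃)₂)`, `f₍₁₂,₃₎ = g` and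
`Q(b₁,b₂,b₃) = (q₁₂(b₁,b₂), b₃)`: the inclusion `(b₁,b₂) ↦ (b₁,b₂,0)` carries `im f₁₂`
into `im f`, `Q` carries `im f` onto `im f₍₁₂,₃₎`, and
`0 → im f₁₂ → im f → im f₍₁₂,₃₎ → 0` is a short exact sequence; in particular
`im f ≅ im f₁₂ ⊕ im f₍₁₂,₃₎`. -/
theorem mayerVietoris_image_decomposition
    {A₂ A₃ B₁ B₂ B₃ : Type*}
    [AddCommGroup A₂] [Module ℝ A₂] [AddCommGroup A₃] [Module ℝ A₃]
    [AddCommGroup B₁] [Module ℝ B₁] [AddCommGroup B₂] [Module ℝ B₂]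
    [AddCommGroup B₃] [Module ℝ B₃]
    (f₁₂ : A₂ →ₗ[ℝ] B₁ × B₂) (f₂₃ : A₃ →ₗ[ℝ] B₂ × B₃)
    (f : A₂ × A₃ →ₗ[ℝ] B₁ × B₂ × B₃)
    (hf : ∀ p : A₂ × A₃,
      f p = ((f₁₂ p.1).1, ((f₁₂ p.1).2 + (f₂₃ p.2).1, (f₂₃ p.2).2)))
    (g : A₃ →ₗ[ℝ] ((B₁ × B₂) ⧸ LinearMap.range f₁₂) × B₃)
    (hg : ∀ a : A₃,
      g a = (Submodule.mkQ (LinearMap.range f₁₂) (0, (f₂₃ a).1), (f₂₃ a).2))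
    (Q : B₁ × B₂ × B₃ →ₗ[ℝ] ((B₁ × B₂) ⧸ LinearMap.range f₁₂) × B₃)
    (hQ : ∀ b : B₁ × B₂ × B₃,
      Q b = (Submodule.mkQ (LinearMap.range f₁₂) (b.1, b.2.1), b.2.2)) :
    (∀ p ∈ LinearMap.range f₁₂, ((p.1, (p.2, 0)) : B₁ × B₂ × B₃) ∈ LinearMap.range f) ∧
    (∀ w ∈ LinearMap.range f, Q w ∈ LinearMap.range g) ∧
    (∀ v ∈ LinearMap.range g, ∃ w ∈ LinearMap.range f, Q w = v) ∧
    (∀ p ∈ LinearMap.range f₁₂, ((p.1, (p.2, 0)) : B₁ × B₂ × B₃) = 0 → p = 0) ∧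
    (∀ w ∈ LinearMap.range f,
      (Q w = 0 ↔ ∃ p ∈ LinearMap.range f₁₂, w = ((p.1, (p.2, 0)) : B₁ × B₂ × B₃))) ∧
    Nonempty (↥(LinearMap.range f) ≃ₗ[ℝ] ↥(LinearMap.range f₁₂) × ↥(LinearMap.range g)) := by
  -- abbreviations
  have h1 : ∀ p ∈ LinearMap.range f₁₂, ((p.1, (p.2, 0)) : B₁ × B₂ × B₃) ∈ LinearMap.range f := by
    rintro p ⟨a, rfl⟩
    exact ⟨(a, 0), by simp [hf]⟩
  have hQf : ∀ q : A₂ × A₃, Q (f q) = g q.2 := by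
    intro q
    rw [hf, hQ, hg]
    have : ((f₁₂ q.1).1, (f₁₂ q.1).2 + (f₂₃ q.2).1) =
        f₁₂ q.1 + ((0 : B₁), (f₂₃ q.2).1) := by
      simp [Prod.ext_iff]
    simp only [this, map_add]
    have : Submodule.mkQ (LinearMap.range f₁₂) (f₁₂ q.1) = 0 := by
      simp [Submodule.Quotient.mk_eq_zero]
    simp [this]
  have h2 : ∀ w ∈ LinearMap.range f, Q w ∈ LinearMap.range g := by
    rintro w ⟨q, rfl⟩
    exact ⟨q.2, (hQf q).symm⟩
  have h3 : ∀ v ∈ LinearMap.range g, ∃ w ∈ LinearMap.range f, Q w = v := by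
    rintro v ⟨a, rfl⟩
    exact ⟨f (0, a), ⟨(0, a), rfl⟩, hQf (0, a)⟩
  have h4 : ∀ p ∈ LinearMap.range f₁₂,
      ((p.1, (p.2, 0)) : B₁ × B₂ × B₃) = 0 → p = 0 := by
    rintro p - hp
    rw [Prod.ext_iff, Prod.ext_iff] at hp
    exact Prod.ext hp.1 hp.2.1
  have h5 : ∀ w ∈ LinearMap.range f,
      (Q w = 0 ↔ ∃ p ∈ LinearMap.range f₁₂, w = ((p.1, (p.2, 0)) : B₁ × B₂ × B₃)) := by
    rintro w ⟨q, rfl⟩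
    constructor
    · intro h0
      rw [hQf, hg, Prod.ext_iff] at h0
      simp only [Prod.fst_zero, Prod.snd_zero] at h0
      obtain ⟨hm, h3'⟩ := h0
      have hmem : ((0 : B₁), (f₂₃ q.2).1) ∈ LinearMap.range f₁₂ := by
        rwa [← Submodule.Quotient.mk_eq_zero (LinearMap.range f₁₂)]
      refine ⟨f₁₂ q.1 + ((0 : B₁), (f₂₃ q.2).1),
        Submodule.add_mem _ ⟨q.1, rfl⟩ hmem, ?_⟩
      rw [hf]
      simp [Prod.ext_iff, h3']
    · rintro ⟨p, hp, hw⟩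
      rw [hw, hQ]
      have : Submodule.mkQ (LinearMap.range f₁₂) (p.1, p.2) = 0 := by
        simp [Submodule.Quotient.mk_eq_zero, hp]
      simp [this]
  refine ⟨h1, h2, h3, h4, h5, ?_⟩
  -- the linear equivalence
  set V := LinearMap.range f
  -- restricted map Q' : V → range g
  let Q' : V →ₗ[ℝ] LinearMap.range g :=
    LinearMap.codRestrict (LinearMap.range g) (Q.comp V.subtype)
      (fun x => h2 x x.2)
  have hQ'surj : Function.Surjective Q' := by
    rintro ⟨v, hv⟩
    obtain ⟨w, hw, hQw⟩ := h3 v hv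
    exact ⟨⟨w, hw⟩, Subtype.ext hQw⟩
  -- kernel of Q' is isomorphic to range f₁₂
  let ι : (B₁ × B₂) →ₗ[ℝ] B₁ × B₂ × B₃ :=
    LinearMap.prodMap LinearMap.id (LinearMap.inl ℝ B₂ B₃)
  have hι : ∀ p : B₁ × B₂, ι p = (p.1, (p.2, 0)) := fun p => rfl
  let e : LinearMap.range f₁₂ →ₗ[ℝ] LinearMap.ker Q' :=
    LinearMap.codRestrict (LinearMap.ker Q')
      (LinearMap.codRestrict V (ι.comp (LinearMap.range f₁₂).subtype)
        (fun p => h1 p p.2))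
      (by
        rintro ⟨p, hp⟩
        rw [LinearMap.mem_ker]
        apply Subtype.ext
        show Q (ι p) = 0
        rw [hι]
        exact (h5 _ (h1 p hp)).2 ⟨p, hp, rfl⟩)
  have he : Function.Bijective e := by
    constructor
    · rintro ⟨p, hp⟩ ⟨p', hp'⟩ h
      have h' : ((p.1, (p.2, 0)) : B₁ × B₂ × B₃) = (p'.1, (p'.2, 0)) :=
        Subtype.ext_iff.mp (Subtype.ext_iff.mp h)
      rw [Prod.ext_iff, Prod.ext_iff] at h'
      exact Subtype.ext (Prod.ext h'.1 h'.2.1)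
    · rintro ⟨⟨w, hw⟩, hk⟩
      have hk' : Q w = 0 := Subtype.ext_iff.mp (LinearMap.mem_ker.mp hk)
      obtain ⟨p, hp, rfl⟩ := (h5 w hw).1 hk'
      exact ⟨⟨p, hp⟩, Subtype.ext (Subtype.ext rfl)⟩
  let eK : (LinearMap.range f₁₂) ≃ₗ[ℝ] LinearMap.ker Q' := LinearEquiv.ofBijective e he
  obtain ⟨K', hK'⟩ := (LinearMap.ker Q').exists_isCompl
  let e1 : (↥(LinearMap.ker Q') × ↥K') ≃ₗ[ℝ] ↥V :=
    Submodule.prodEquivOfIsCompl _ _ hK'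
  let e2 : (↥V ⧸ LinearMap.ker Q') ≃ₗ[ℝ] ↥K' :=
    Submodule.quotientEquivOfIsCompl _ _ hK'
  let e3 : (↥V ⧸ LinearMap.ker Q') ≃ₗ[ℝ] ↥(LinearMap.range g) :=
    Q'.quotKerEquivOfSurjective hQ'surj
  exact ⟨e1.symm.trans (eK.symm.prodCongr (e2.symm.trans e3))⟩
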